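/- Let G be a graph with a maximal P3-packing S containing fewer than k paths, and let A = V(G) \ V(S). If |A| > 12k, then the number of connected components of G[A] exceeds 2|N(A)|. -/
import Mathlib


open Finset

variable {V : Type*}

/-- vertex set of an (ordered) 3-path -/
def TripSet [DecidableEq V] (t : V × V × V) : Finset V := {t.1, t.2.1, t.2.2}

/-- a P3-packing: a collection of vertex-disjoint paths on three vertices -/
def IsP3Packing [DecidableEq V] (G : SimpleGraph V) (P : Finset (V × V × V)) : Prop :=
  (∀ t ∈ P, G.Adj t.1 t.2.1 ∧ G.Adj t.2.1 t.2.2 ∧ t.1 ≠ t.2.2) ∧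
  (∀ t ∈ P, ∀ s ∈ P, t ≠ s → Disjoint (TripSet t) (TripSet s))

/-- `D` is a 3-path vertex cover of the induced subgraph `G[S]` -/
def IsP3VCOn (G : SimpleGraph V) (S D : Finset V) : Prop :=
  ∀ a b c : V, a ∈ S → b ∈ S → c ∈ S → G.Adj a b → G.Adj b c → a ≠ c →
    a ∈ D ∨ b ∈ D ∨ c ∈ D

def IsP3VC (G : SimpleGraph V) (C : Finset V) : Prop :=
  ∀ a b c : V, G.Adj a b → G.Adj b c → a ≠ c → a ∈ C ∨ b ∈ C ∨ c ∈ C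

def NSet [Fintype V] [DecidableEq V] (G : SimpleGraph V) [DecidableRel G.Adj]
    (S : Finset V) : Finset V :=
  Finset.univ.filter (fun w => w ∉ S ∧ ∃ x ∈ S, G.Adj w x)

/-- a good decomposition `(I, C, R)` of `G` -/
def IsGoodDecomp [Fintype V] [DecidableEq V] (G : SimpleGraph V) [DecidableRel G.Adj]
    (I C R : Finset V) : Prop :=
  (I ∪ C ∪ R = Finset.univ) ∧ Disjoint I C ∧ Disjoint I R ∧ Disjoint C R ∧
  (∀ a ∈ I, (I.filter (fun b => G.Adj a b)).card ≤ 1) ∧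
  (∃ P : Finset (V × V × V), IsP3Packing G P ∧ (∀ t ∈ P, TripSet t ⊆ I ∪ C) ∧
    P.card = C.card) ∧
  (∀ a ∈ I, ∀ b ∈ R, ¬ G.Adj a b)

theorem stmt11 [Fintype V] [DecidableEq V] (G : SimpleGraph V) [DecidableRel G.Adj]
    (k : ℕ) (S : Finset (V × V × V)) (hS : IsP3Packing G S)
    (hmax : ∀ S' : Finset (V × V × V), IsP3Packing G S' → S ⊆ S' → S' = S)
    (hk : S.card < k)
    (A : Finset V) (hA : A = Finset.univ \ S.biUnion TripSet)
    (hbig : A.card > 12 * k) :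
    Nat.card ((G.induce (↑A : Set V)).ConnectedComponent) > 2 * (NSet G A).card := by
  classical
  -- membership in A
  have hAmem : ∀ v, v ∈ A ↔ ∀ t ∈ S, v ∉ TripSet t := by
    intro v; subst hA; simp
  -- no P3 inside A
  have key : ∀ a b c, a ∈ A → b ∈ A → c ∈ A → G.Adj a b → G.Adj b c → a = c := by
    intro a b c ha hb hc hab hbc
    by_contra hac
    set t : V × V × V := (a, b, c) with ht
    have htset : TripSet t = {a, b, c} := rfl
    have hsub : ∀ v ∈ TripSet t, v ∈ A := by
      intro v hv
      rw [htset, Finset.mem_insert, Finset.mem_insert, Finset.mem_singleton] at hv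
      rcases hv with rfl | rfl | rfl <;> assumption
    have hdisj : ∀ s ∈ S, Disjoint (TripSet t) (TripSet s) := by
      intro s hs
      rw [Finset.disjoint_left]
      intro v hv hvs
      exact (hAmem v).1 (hsub v hv) s hs hvs
    have htnot : t ∉ S := by
      intro hts
      exact (hAmem a).1 ha t hts (by simp [htset])
    have hpack : IsP3Packing G (insert t S) := by
      constructor
      · intro s hs
        rcases Finset.mem_insert.1 hs with rfl | hs
        · exact ⟨hab, hbc, hac⟩
        · exact hS.1 s hs
      · intro s1 h1 s2 h2 hne
        rcases Finset.mem_insert.1 h1 with rfl | h1 <;>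
          rcases Finset.mem_insert.1 h2 with rfl | h2
        · exact absurd rfl hne
        · exact hdisj s2 h2
        · exact (hdisj s1 h1).symm
        · exact hS.2 s1 h1 s2 h2 hne
    have := hmax (insert t S) hpack (Finset.subset_insert _ _)
    exact htnot (this ▸ Finset.mem_insert_self t S)
  set H := G.induce (↑A : Set V) with hH
  -- reachable implies equal or adjacent
  have hreach : ∀ x y : (↑A : Set V), H.Reachable x y → x = y ∨ H.Adj x y := by
    intro x y hxy
    obtain ⟨w⟩ := hxy
    induction w with
    | nil => exact Or.inl rfl
    | @cons u m y h p ih =>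
      rcases ih with rfl | hadj
      · exact Or.inr h
      · by_cases huy : u = y
        · exact Or.inl huy
        · exfalso
          have h1 : G.Adj (u : V) (m : V) := h
          have h2 : G.Adj (m : V) (y : V) := hadj
          have := key u m y (by exact u.2) (by exact m.2) (by exact y.2) h1 h2
          exact huy (Subtype.ext this)
  -- fibers of connectedComponentMk have size ≤ 2
  have hfib : ∀ c ∈ (Finset.univ.image (H.connectedComponentMk)),
      ((Finset.univ.filter (fun x => H.connectedComponentMk x = c)).card ≤ 2) := by
    intro c _
    by_contra hgt
    push_neg at hgt
    obtain ⟨x, y, z, hx, hy, hz, hxy, hxz, hyz⟩ := Finset.two_lt_card_iff.1 hgt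
    simp only [Finset.mem_filter] at hx hy hz
    have rxy : H.Reachable x y := (SimpleGraph.ConnectedComponent.eq).1 (hx.2.trans hy.2.symm)
    have ryz : H.Reachable y z := (SimpleGraph.ConnectedComponent.eq).1 (hy.2.trans hz.2.symm)
    have axy : H.Adj x y := ((hreach x y rxy).resolve_left hxy)
    have ayz : H.Adj y z := ((hreach y z ryz).resolve_left hyz)
    have := key x y z x.2 y.2 z.2 axy ayz
    exact hxz (Subtype.ext this)
  have hcard1 : (Finset.univ : Finset (↑A : Set V)).card ≤
      2 * (Finset.univ.image (H.connectedComponentMk)).card :=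
    Finset.card_le_mul_card_image _ 2 hfib
  have hfin : Fintype H.ConnectedComponent := Fintype.ofFinite _
  have himg : (Finset.univ.image (H.connectedComponentMk)).card ≤
      Nat.card H.ConnectedComponent := by
    rw [Nat.card_eq_fintype_card]
    exact Finset.card_le_card (Finset.subset_univ _)
  have hAcard : (Finset.univ : Finset (↑A : Set V)).card = A.card := by
    simp [Finset.card_univ]
  -- N(A) is inside V(S)
  have hNsub : NSet G A ⊆ S.biUnion TripSet := by
    intro w hw
    rw [NSet, Finset.mem_filter] at hw
    have := hw.2.1
    by_contra hns
    exact this (by subst hA; simp [hns])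
  have hNcard : (NSet G A).card ≤ 3 * S.card := by
    calc (NSet G A).card ≤ (S.biUnion TripSet).card := Finset.card_le_card hNsub
    _ ≤ ∑ t ∈ S, (TripSet t).card := Finset.card_biUnion_le
    _ ≤ ∑ t ∈ S, 3 := Finset.sum_le_sum (fun t _ => by
        rw [TripSet]
        exact (Finset.card_insert_le _ _).trans (by
          exact Nat.succ_le_succ (Finset.card_insert_le _ _)))
    _ = 3 * S.card := by rw [Finset.sum_const, smul_eq_mul, Nat.mul_comm]
  omega
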